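/- For a fixed complex m×n matrix A, the function p ↦ ‖A‖_p (the spectral p-norm) is Lipschitz continuous on [1, ∞): for p > q ≥ 1, 0 ≤ ‖A‖_p − ‖A‖_q ≤ (p − q)·|A|₁·(mn)·log(mn), where |A|₁ is the sum of absolute values of entries of A. -/

import Mathlib

/-- The spectral p-norm of a complex m×n matrix. -/
noncomputable def specNorm (m n : ℕ) (p : ℝ) (A : Matrix (Fin m) (Fin n) ℂ) : ℝ :=
  sSup {t : ℝ | ∃ (x : Fin n → ℂ) (y : Fin m → ℂ),
    (∑ j, ‖x j‖ ^ p) = 1 ∧ (∑ i, ‖y i‖ ^ p) = 1 ∧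
    t = ‖∑ i, ∑ j, A i j * x j * y i‖}

namespace SpecAux

open Finset Real

/-- The set whose supremum is the spectral p-norm. -/
def S (m n : ℕ) (p : ℝ) (A : Matrix (Fin m) (Fin n) ℂ) : Set ℝ :=
  {t : ℝ | ∃ (x : Fin n → ℂ) (y : Fin m → ℂ),
    (∑ j, ‖x j‖ ^ p) = 1 ∧ (∑ i, ‖y i‖ ^ p) = 1 ∧
    t = ‖∑ i, ∑ j, A i j * x j * y i‖}

lemma specNorm_eq (m n : ℕ) (p : ℝ) (A : Matrix (Fin m) (Fin n) ℂ) :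
    specNorm m n p A = sSup (S m n p A) := rfl

variable {m n : ℕ} (A : Matrix (Fin m) (Fin n) ℂ)

lemma norm_le_one {k : ℕ} {p : ℝ} (hp : 1 ≤ p) {x : Fin k → ℂ}
    (hx : (∑ j, ‖x j‖ ^ p) = 1) (j : Fin k) : ‖x j‖ ≤ 1 := by
  by_contra h
  push_neg at h
  have h1 : ‖x j‖ ^ p ≤ 1 := by
    rw [← hx]
    exact Finset.single_le_sum (fun i _ => Real.rpow_nonneg (norm_nonneg _) p) (mem_univ j)
  have h2 : (1:ℝ) < ‖x j‖ ^ p := by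
    calc (1:ℝ) < ‖x j‖ := h
    _ = ‖x j‖ ^ (1:ℝ) := (Real.rpow_one _).symm
    _ ≤ ‖x j‖ ^ p := Real.rpow_le_rpow_of_exponent_le h.le hp
  linarith

lemma elem_bound {p : ℝ} (hp : 1 ≤ p) {t : ℝ} (ht : t ∈ S m n p A) :
    0 ≤ t ∧ t ≤ ∑ i, ∑ j, ‖A i j‖ := by
  obtain ⟨x, y, hx, hy, rfl⟩ := ht
  refine ⟨norm_nonneg _, ?_⟩
  calc ‖∑ i, ∑ j, A i j * x j * y i‖ ≤ ∑ i, ‖∑ j, A i j * x j * y i‖ := norm_sum_le _ _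
  _ ≤ ∑ i, ∑ j, ‖A i j * x j * y i‖ := Finset.sum_le_sum fun i _ => norm_sum_le _ _
  _ ≤ ∑ i, ∑ j, ‖A i j‖ := by
      refine Finset.sum_le_sum fun i _ => Finset.sum_le_sum fun j _ => ?_
      rw [norm_mul, norm_mul]
      have h1 := norm_le_one hp hx j
      have h2 := norm_le_one hp hy i
      calc ‖A i j‖ * ‖x j‖ * ‖y i‖ ≤ ‖A i j‖ * 1 * 1 := by
            gcongr <;> first | exact norm_nonneg _ | exact h1 | exact h2
      _ = ‖A i j‖ := by ring

lemma bdd {p : ℝ} (hp : 1 ≤ p) : BddAbove (S m n p A) :=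
  ⟨∑ i, ∑ j, ‖A i j‖, fun _ ht => (elem_bound A hp ht).2⟩

lemma nonempty (hm : 0 < m) (hn : 0 < n) {p : ℝ} (hp : 0 < p) : (S m n p A).Nonempty := by
  have key : ∀ (k : ℕ) (j0 : Fin k),
      (∑ j, ‖(fun j => if j = j0 then (1:ℂ) else 0) j‖ ^ p) = 1 := by
    intro k j0
    rw [Finset.sum_eq_single j0]
    · simp
    · intro b _ hb; simp [hb, Real.zero_rpow hp.ne']
    · simp
  exact ⟨_, _, _, key n ⟨0, hn⟩, key m ⟨0, hm⟩, rfl⟩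

lemma sSup_nonneg (hm : 0 < m) (hn : 0 < n) {p : ℝ} (hp : 1 ≤ p) :
    0 ≤ sSup (S m n p A) := by
  obtain ⟨t, ht⟩ := nonempty A hm hn (by linarith : (0:ℝ) < p)
  exact le_trans (elem_bound A hp ht).1 (le_csSup (bdd A hp) ht)

lemma sSup_le_B {p : ℝ} (hm : 0 < m) (hn : 0 < n) (hp : 1 ≤ p) :
    sSup (S m n p A) ≤ ∑ i, ∑ j, ‖A i j‖ :=
  csSup_le (nonempty A hm hn (by linarith)) fun _ ht => (elem_bound A hp ht).2

lemma sum_pos_other {k : ℕ} {a b : ℝ} (ha : 0 < a) {x : Fin k → ℂ}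
    (hx : (∑ j, ‖x j‖ ^ a) = 1) : 0 < ∑ j, ‖x j‖ ^ b := by
  have hex : ∃ j, x j ≠ 0 := by
    by_contra h
    push_neg at h
    simp [h, Real.zero_rpow ha.ne'] at hx
  obtain ⟨j, hj⟩ := hex
  calc (0:ℝ) < ‖x j‖ ^ b := Real.rpow_pos_of_pos (norm_pos_iff.2 hj) _
  _ ≤ ∑ j, ‖x j‖ ^ b :=
      Finset.single_le_sum (fun i _ => Real.rpow_nonneg (norm_nonneg _) b) (mem_univ j)

lemma sum_le_one {k : ℕ} {p q : ℝ} (hq : 1 ≤ q) (hqp : q ≤ p) {x : Fin k → ℂ}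
    (hx : (∑ j, ‖x j‖ ^ q) = 1) : (∑ j, ‖x j‖ ^ p) ≤ 1 := by
  have h1 := norm_le_one hq hx
  rw [← hx]
  refine Finset.sum_le_sum fun j _ => ?_
  rcases eq_or_lt_of_le (norm_nonneg (x j)) with h0 | h0
  · rw [← h0, Real.zero_rpow (by linarith), Real.zero_rpow (by linarith)]
  · exact Real.rpow_le_rpow_of_exponent_ge h0 (h1 j) hqp

/-- Normalizing a pair of vectors to the p-sphere. -/
lemma scale_exists {p : ℝ} (hp : 0 < p) (x : Fin n → ℂ) (y : Fin m → ℂ)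
    (hx : 0 < ∑ j, ‖x j‖ ^ p) (hy : 0 < ∑ i, ‖y i‖ ^ p) :
    ((∑ j, ‖x j‖ ^ p) ^ (-1/p) * (∑ i, ‖y i‖ ^ p) ^ (-1/p) * ‖∑ i, ∑ j, A i j * x j * y i‖)
      ∈ S m n p A := by
  set sx := ∑ j, ‖x j‖ ^ p with hsx
  set sy := ∑ i, ‖y i‖ ^ p with hsy
  set cx := sx ^ (-1/p) with hcx
  set cy := sy ^ (-1/p) with hcy
  have hcx0 : 0 < cx := Real.rpow_pos_of_pos hx _
  have hcy0 : 0 < cy := Real.rpow_pos_of_pos hy _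
  have hpow : ∀ (s : ℝ), 0 < s → (s ^ (-1/p)) ^ p = s⁻¹ := by
    intro s hs
    rw [← Real.rpow_mul hs.le, div_mul_cancel₀ _ hp.ne', Real.rpow_neg_one]
  refine ⟨fun j => (cx : ℂ) * x j, fun i => (cy : ℂ) * y i, ?_, ?_, ?_⟩
  · have hterm : ∀ j : Fin n, ‖(cx : ℂ) * x j‖ ^ p = cx ^ p * ‖x j‖ ^ p := by
      intro j
      rw [norm_mul, Complex.norm_real, Real.norm_eq_abs, abs_of_nonneg hcx0.le,
        Real.mul_rpow hcx0.le (norm_nonneg _)]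
    simp only [hterm]
    simp only [hterm, ← Finset.mul_sum, ← hsx, hcx, hpow sx hx, inv_mul_cancel₀ hx.ne']
  · have hterm : ∀ i : Fin m, ‖(cy : ℂ) * y i‖ ^ p = cy ^ p * ‖y i‖ ^ p := by
      intro i
      rw [norm_mul, Complex.norm_real, Real.norm_eq_abs, abs_of_nonneg hcy0.le,
        Real.mul_rpow hcy0.le (norm_nonneg _)]
    simp only [hterm]
    simp only [hterm, ← Finset.mul_sum, ← hsy, hcy, hpow sy hy, inv_mul_cancel₀ hy.ne']
  · have hval : (∑ i, ∑ j, A i j * ((cx:ℂ) * x j) * ((cy:ℂ) * y i))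
        = ((cx : ℂ) * (cy : ℂ)) * ∑ i, ∑ j, A i j * x j * y i := by
      rw [Finset.mul_sum]
      refine Finset.sum_congr rfl fun i _ => ?_
      rw [Finset.mul_sum]
      exact Finset.sum_congr rfl fun j _ => by ring
    rw [hval, norm_mul, norm_mul, Complex.norm_real, Complex.norm_real,
      Real.norm_eq_abs, Real.norm_eq_abs, abs_of_nonneg hcx0.le, abs_of_nonneg hcy0.le]

/-- Monotonicity in p. -/
lemma sSup_mono (hm : 0 < m) (hn : 0 < n) {p q : ℝ} (hq : 1 ≤ q) (hqp : q ≤ p) :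
    sSup (S m n q A) ≤ sSup (S m n p A) := by
  have hp : 1 ≤ p := hq.trans hqp
  have hp0 : (0:ℝ) < p := by linarith
  refine csSup_le (nonempty A hm hn (by linarith)) fun t ht => ?_
  obtain ⟨x, y, hx, hy, rfl⟩ := ht
  have hsx : 0 < ∑ j, ‖x j‖ ^ p := sum_pos_other (by linarith) hx
  have hsy : 0 < ∑ i, ‖y i‖ ^ p := sum_pos_other (by linarith) hy
  have hmem := scale_exists A hp0 x y hsx hsy
  have hle := le_csSup (bdd A hp) hmem
  have hxle1 : (∑ j, ‖x j‖ ^ p) ≤ 1 := sum_le_one hq hqp hx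
  have hyle1 : (∑ i, ‖y i‖ ^ p) ≤ 1 := sum_le_one hq hqp hy
  have hcx1 : 1 ≤ (∑ j, ‖x j‖ ^ p) ^ (-1/p) := by
    calc (1:ℝ) = (∑ j, ‖x j‖ ^ p) ^ (0:ℝ) := (Real.rpow_zero _).symm
    _ ≤ (∑ j, ‖x j‖ ^ p) ^ (-1/p) :=
        Real.rpow_le_rpow_of_exponent_ge hsx hxle1
          (by rw [neg_div]; exact neg_nonpos.mpr (by positivity))
  have hcy1 : 1 ≤ (∑ i, ‖y i‖ ^ p) ^ (-1/p) := by
    calc (1:ℝ) = (∑ i, ‖y i‖ ^ p) ^ (0:ℝ) := (Real.rpow_zero _).symm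
    _ ≤ (∑ i, ‖y i‖ ^ p) ^ (-1/p) :=
        Real.rpow_le_rpow_of_exponent_ge hsy hyle1
          (by rw [neg_div]; exact neg_nonpos.mpr (by positivity))
  refine le_trans ?_ hle
  have ht0 : 0 ≤ ‖∑ i, ∑ j, A i j * x j * y i‖ := norm_nonneg _
  have hcc : 1 ≤ (∑ j, ‖x j‖ ^ p) ^ (-1/p) * (∑ i, ‖y i‖ ^ p) ^ (-1/p) := by nlinarith
  calc ‖∑ i, ∑ j, A i j * x j * y i‖ = 1 * ‖∑ i, ∑ j, A i j * x j * y i‖ := (one_mul _).symm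
  _ ≤ (∑ j, ‖x j‖ ^ p) ^ (-1/p) * (∑ i, ‖y i‖ ^ p) ^ (-1/p)
        * ‖∑ i, ∑ j, A i j * x j * y i‖ := mul_le_mul_of_nonneg_right hcc ht0

/-- The power mean inequality step. -/
lemma power_mean {k : ℕ} (hk : 0 < k) {p q : ℝ} (hq : 0 < q) (hqp : q ≤ p) {x : Fin k → ℂ}
    (hx : (∑ j, ‖x j‖ ^ p) = 1) : (∑ j, ‖x j‖ ^ q) ≤ (k:ℝ) ^ (1 - q/p) := by
  have hp : 0 < p := lt_of_lt_of_le hq hqp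
  have hk' : (0:ℝ) < (k:ℝ) := by exact_mod_cast hk
  have h := Real.rpow_arith_mean_le_arith_mean_rpow Finset.univ (fun _ : Fin k => (k:ℝ)⁻¹)
    (fun j => ‖x j‖ ^ q) (fun i _ => by positivity)
    (by simp [Finset.sum_const, Finset.card_univ]; field_simp)
    (fun i _ => Real.rpow_nonneg (norm_nonneg _) q)
    ((one_le_div hq).2 hqp)
  have hrw : ∀ j : Fin k, (‖x j‖ ^ q) ^ (p/q) = ‖x j‖ ^ p := by
    intro j
    rw [← Real.rpow_mul (norm_nonneg _)]
    congr 1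
    field_simp
  simp only [hrw, ← Finset.mul_sum, hx, mul_one] at h
  have h2 := Real.rpow_le_rpow (by positivity) h (le_of_lt (by positivity : (0:ℝ) < q/p))
  rw [← Real.rpow_mul (by positivity)] at h2
  have he : p / q * (q / p) = 1 := by field_simp
  rw [he, Real.rpow_one] at h2
  have h3 : ((k:ℝ)⁻¹) ^ (q/p) = (k:ℝ) ^ (-(q/p)) := by
    rw [← Real.rpow_neg_one, ← Real.rpow_mul hk'.le]
    norm_num
  have h4 : (k:ℝ) * (k:ℝ) ^ (-(q/p)) = (k:ℝ) ^ (1 - q/p) := by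
    calc (k:ℝ) * (k:ℝ) ^ (-(q/p)) = (k:ℝ) ^ (1:ℝ) * (k:ℝ) ^ (-(q/p)) := by
          rw [Real.rpow_one]
    _ = (k:ℝ) ^ (1 - q/p) := by rw [← Real.rpow_add hk']; ring_nf
  rw [h3] at h2
  calc (∑ j, ‖x j‖ ^ q) = (k:ℝ) * ((k:ℝ)⁻¹ * ∑ j, ‖x j‖ ^ q) := by field_simp
  _ ≤ (k:ℝ) * (k:ℝ) ^ (-(q/p)) := mul_le_mul_of_nonneg_left h2 hk'.le
  _ = (k:ℝ) ^ (1 - q/p) := h4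

/-- Upper bound: ‖A‖_p ≤ n^s m^s ‖A‖_q with s = 1/q - 1/p. -/
lemma sSup_upper (hm : 0 < m) (hn : 0 < n) {p q : ℝ} (hq : 1 ≤ q) (hqp : q ≤ p) :
    sSup (S m n p A) ≤
      (n:ℝ) ^ (1/q - 1/p) * ((m:ℝ) ^ (1/q - 1/p)) * sSup (S m n q A) := by
  have hp : 1 ≤ p := hq.trans hqp
  have hq0 : (0:ℝ) < q := by linarith
  have hp0 : (0:ℝ) < p := by linarith
  refine csSup_le (nonempty A hm hn (by linarith)) fun t ht => ?_
  obtain ⟨x, y, hx, hy, rfl⟩ := ht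
  have hsx : 0 < ∑ j, ‖x j‖ ^ q := sum_pos_other hp0 hx
  have hsy : 0 < ∑ i, ‖y i‖ ^ q := sum_pos_other hp0 hy
  have hmem := scale_exists A hq0 x y hsx hsy
  have hle := le_csSup (bdd A hq) hmem
  have hSq0 : 0 ≤ sSup (S m n q A) := sSup_nonneg A hm hn hq
  -- power mean bounds
  have hxpm : (∑ j, ‖x j‖ ^ q) ≤ (n:ℝ) ^ (1 - q/p) := power_mean hn hq0 hqp hx
  have hypm : (∑ i, ‖y i‖ ^ q) ≤ (m:ℝ) ^ (1 - q/p) := power_mean hm hq0 hqp hy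
  have hn' : (0:ℝ) < (n:ℝ) := by exact_mod_cast hn
  have hm' : (0:ℝ) < (m:ℝ) := by exact_mod_cast hm
  have hexp : (1 - q/p) * (1/q) = 1/q - 1/p := by
    field_simp
  have hxq : (∑ j, ‖x j‖ ^ q) ^ ((1:ℝ)/q) ≤ (n:ℝ) ^ (1/q - 1/p) := by
    calc (∑ j, ‖x j‖ ^ q) ^ ((1:ℝ)/q) ≤ ((n:ℝ) ^ (1 - q/p)) ^ ((1:ℝ)/q) :=
          Real.rpow_le_rpow hsx.le hxpm (by positivity)
    _ = (n:ℝ) ^ (1/q - 1/p) := by rw [← Real.rpow_mul hn'.le, hexp]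
  have hyq : (∑ i, ‖y i‖ ^ q) ^ ((1:ℝ)/q) ≤ (m:ℝ) ^ (1/q - 1/p) := by
    calc (∑ i, ‖y i‖ ^ q) ^ ((1:ℝ)/q) ≤ ((m:ℝ) ^ (1 - q/p)) ^ ((1:ℝ)/q) :=
          Real.rpow_le_rpow hsy.le hypm (by positivity)
    _ = (m:ℝ) ^ (1/q - 1/p) := by rw [← Real.rpow_mul hm'.le, hexp]
  -- decompose t
  set t := ‖∑ i, ∑ j, A i j * x j * y i‖ with htdef
  set sx := ∑ j, ‖x j‖ ^ q with hsxd
  set sy := ∑ i, ‖y i‖ ^ q with hsyd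
  have h1 : sx ^ ((1:ℝ)/q) * sx ^ (-1/q) = 1 := by
    rw [← Real.rpow_add hsx, show (1:ℝ)/q + -1/q = 0 from by ring, Real.rpow_zero]
  have h2 : sy ^ ((1:ℝ)/q) * sy ^ (-1/q) = 1 := by
    rw [← Real.rpow_add hsy, show (1:ℝ)/q + -1/q = 0 from by ring, Real.rpow_zero]
  have ht' : 0 ≤ sx ^ (-1/q) * sy ^ (-1/q) * t :=
    mul_nonneg (mul_nonneg (Real.rpow_nonneg hsx.le _) (Real.rpow_nonneg hsy.le _))
      (norm_nonneg _)
  calc t = sx ^ ((1:ℝ)/q) * sy ^ ((1:ℝ)/q) * (sx ^ (-1/q) * sy ^ (-1/q) * t) := by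
        rw [show sx ^ ((1:ℝ)/q) * sy ^ ((1:ℝ)/q) * (sx ^ (-1/q) * sy ^ (-1/q) * t)
            = (sx ^ ((1:ℝ)/q) * sx ^ (-1/q)) * (sy ^ ((1:ℝ)/q) * sy ^ (-1/q)) * t by ring,
          h1, h2]
        ring
  _ ≤ (n:ℝ) ^ (1/q - 1/p) * ((m:ℝ) ^ (1/q - 1/p)) * (sx ^ (-1/q) * sy ^ (-1/q) * t) := by
        have := mul_le_mul hxq hyq (Real.rpow_nonneg hsy.le _) (Real.rpow_nonneg hn'.le _)
        exact mul_le_mul_of_nonneg_right this ht'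
  _ ≤ (n:ℝ) ^ (1/q - 1/p) * ((m:ℝ) ^ (1/q - 1/p)) * sSup (S m n q A) := by
        refine mul_le_mul_of_nonneg_left hle ?_
        positivity

/-- Numeric lemma: `N^s - 1 ≤ s N log N`. -/
lemma numeric {N s : ℝ} (hN : 1 ≤ N) (hs0 : 0 ≤ s) (hs1 : s ≤ 1) :
    N ^ s - 1 ≤ s * N * Real.log N := by
  have hlog : 0 ≤ Real.log N := Real.log_nonneg hN
  have hN0 : 0 < N := by linarith
  set u := s * Real.log N with hu
  have hu0 : 0 ≤ u := by positivity
  have hNs : N ^ s = Real.exp u := by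
    rw [Real.rpow_def_of_pos hN0, hu]; ring_nf
  have hexp : Real.exp u - 1 ≤ u * Real.exp u := by
    have h5 := Real.add_one_le_exp (-u)
    have h6 : Real.exp (-u) = (Real.exp u)⁻¹ := Real.exp_neg u
    have h7 : 0 < Real.exp u := Real.exp_pos u
    rw [h6] at h5
    have h8 : (1 - u) * Real.exp u ≤ 1 := by
      calc (1 - u) * Real.exp u = (-u + 1) * Real.exp u := by ring
      _ ≤ (Real.exp u)⁻¹ * Real.exp u := mul_le_mul_of_nonneg_right h5 h7.le
      _ = 1 := inv_mul_cancel₀ h7.ne'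
    nlinarith
  have hNsN : N ^ s ≤ N := by
    calc N ^ s ≤ N ^ (1:ℝ) := Real.rpow_le_rpow_of_exponent_le hN hs1
    _ = N := Real.rpow_one N
  calc N ^ s - 1 ≤ u * N ^ s := by rw [hNs]; exact hexp
  _ ≤ u * N := mul_le_mul_of_nonneg_left hNsN hu0
  _ = s * N * Real.log N := by rw [hu]; ring

lemma s_facts {p q : ℝ} (hq : 1 ≤ q) (hpq : q < p) :
    0 < 1/q - 1/p ∧ 1/q - 1/p ≤ 1 ∧ 1/q - 1/p ≤ p - q := by
  have hq0 : 0 < q := by linarith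
  have hp0 : 0 < p := by linarith
  have h1q : 1/q ≤ 1 := by rw [div_le_one hq0]; exact hq
  have h1p : 0 < 1/p := by positivity
  have h2 : 1/p < 1/q := one_div_lt_one_div_of_lt hq0 hpq
  refine ⟨by linarith, by linarith, ?_⟩
  have h1 : 1/q - 1/p = (p - q) / (q * p) := by field_simp
  rw [h1]
  exact div_le_self (by linarith) (by nlinarith)

end SpecAux

/-- Lipschitz continuity of p ↦ ‖A‖_p. -/
theorem stmt_4 (m n : ℕ) (A : Matrix (Fin m) (Fin n) ℂ) (p q : ℝ)
    (hq : 1 ≤ q) (hpq : q < p) :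
    0 ≤ specNorm m n p A - specNorm m n q A ∧
    specNorm m n p A - specNorm m n q A ≤
      (p - q) * (∑ i, ∑ j, ‖A i j‖) * ((m * n : ℕ) : ℝ) * Real.log ((m * n : ℕ) : ℝ) := by
  open SpecAux in
  rcases Nat.eq_zero_or_pos m with hm | hm
  · have hS : ∀ r : ℝ, S m n r A = ∅ := by
      intro r
      ext t
      simp only [S, Set.mem_setOf_eq, Set.mem_empty_iff_false, iff_false]
      rintro ⟨x, y, hx, hy, -⟩
      subst hm
      simp at hy
    rw [specNorm_eq, specNorm_eq, hS p, hS q, Real.sSup_empty]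
    subst hm
    norm_num
  rcases Nat.eq_zero_or_pos n with hn | hn
  · have hS : ∀ r : ℝ, S m n r A = ∅ := by
      intro r
      ext t
      simp only [S, Set.mem_setOf_eq, Set.mem_empty_iff_false, iff_false]
      rintro ⟨x, y, hx, hy, -⟩
      subst hn
      simp at hx
    rw [specNorm_eq, specNorm_eq, hS p, hS q, Real.sSup_empty]
    subst hn
    norm_num
  -- main case
  have hq0 : (0:ℝ) < q := by linarith
  have hp : 1 ≤ p := by linarith
  obtain ⟨hs0, hs1, hspq⟩ := SpecAux.s_facts hq hpq
  set s := 1/q - 1/p with hs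
  have hmono := SpecAux.sSup_mono A hm hn hq hpq.le
  have hupper := SpecAux.sSup_upper A hm hn hq hpq.le
  have hSqB := SpecAux.sSup_le_B A hm hn hq
  have hSq0 := SpecAux.sSup_nonneg A hm hn hq
  have hn' : (1:ℝ) ≤ (n:ℝ) := by exact_mod_cast hn
  have hm' : (1:ℝ) ≤ (m:ℝ) := by exact_mod_cast hm
  have hN : (1:ℝ) ≤ ((m * n : ℕ) : ℝ) := by
    push_cast
    nlinarith
  have hNs : (n:ℝ) ^ s * ((m:ℝ) ^ s) = ((m * n : ℕ) : ℝ) ^ s := by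
    push_cast
    rw [← Real.mul_rpow (by linarith) (by linarith)]
    ring_nf
  set N := ((m * n : ℕ) : ℝ) with hNdef
  have hnum : N ^ s - 1 ≤ (p - q) * N * Real.log N := by
    calc N ^ s - 1 ≤ s * N * Real.log N := SpecAux.numeric hN hs0.le hs1
    _ ≤ (p - q) * N * Real.log N := by
        have hlog : 0 ≤ Real.log N := Real.log_nonneg hN
        have : 0 ≤ N * Real.log N := by nlinarith
        nlinarith
  have hB0 : 0 ≤ ∑ i, ∑ j, ‖A i j‖ :=
    Finset.sum_nonneg fun i _ => Finset.sum_nonneg fun j _ => norm_nonneg _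
  have hNs1 : 1 ≤ N ^ s := by
    calc (1:ℝ) = N ^ (0:ℝ) := (Real.rpow_zero N).symm
    _ ≤ N ^ s := Real.rpow_le_rpow_of_exponent_le hN hs0.le
  constructor
  · rw [specNorm_eq, specNorm_eq]
    linarith
  · rw [specNorm_eq, specNorm_eq]
    have key : sSup (S m n p A) - sSup (S m n q A) ≤ (N ^ s - 1) * (∑ i, ∑ j, ‖A i j‖) := by
      have h1 : sSup (S m n p A) ≤ N ^ s * sSup (S m n q A) := by
        calc sSup (S m n p A) ≤ (n:ℝ) ^ s * ((m:ℝ) ^ s) * sSup (S m n q A) := hupper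
        _ = N ^ s * sSup (S m n q A) := by rw [hNs]
      have h2 : (N ^ s - 1) * sSup (S m n q A) ≤ (N ^ s - 1) * (∑ i, ∑ j, ‖A i j‖) :=
        mul_le_mul_of_nonneg_left hSqB (by linarith)
      nlinarith
    calc sSup (S m n p A) - sSup (S m n q A) ≤ (N ^ s - 1) * (∑ i, ∑ j, ‖A i j‖) := key
    _ ≤ ((p - q) * N * Real.log N) * (∑ i, ∑ j, ‖A i j‖) :=
        mul_le_mul_of_nonneg_right hnum hB0
    _ = (p - q) * (∑ i, ∑ j, ‖A i j‖) * N * Real.log N := by ring
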